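/- Let g_1, …, g_n ∈ F_{q^m} be linearly independent over F_q and let k ≤ n. If f is a nonzero q-linearized polynomial over F_{q^m} of q-degree at most k − 1, then the F_q-dimension of the F_q-span of f(g_1), …, f(g_n) is at least n − k + 1. Consequently, the Gabidulin code of dimension k evaluated at g_1, …, g_n has minimum rank distance n − k + 1. -/

import Mathlib

open Polynomial

/-- `f` is a `q`-linearized polynomial: every monomial with nonzero coefficient
has exponent a power of `q`, i.e. `f = Σ aᵢ X^(q^i)`. -/
def IsqLinearized (q : ℕ) {L : Type*} [Field L] (f : L[X]) : Prop :=
  ∀ i : ℕ, f.coeff i ≠ 0 → ∃ j : ℕ, i = q ^ j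

/-- The sequence of "annihilator" linearized polynomials: `annSeq q g' 0 = X` and
`annSeq q g' (j+1) = (annSeq q g' j)^q - c_j • annSeq q g' j` where `c_j` kills `g' j`. -/
noncomputable def annSeq (q : ℕ) {L : Type*} [Field L] (g' : ℕ → L) : ℕ → L[X]
  | 0 => X
  | j + 1 =>
      annSeq q g' j ^ q - C ((annSeq q g' j).eval (g' j) ^ (q - 1)) * annSeq q g' j

section Helpers

variable {L : Type*} [Field L]

lemma annSeq_natDegree {q : ℕ} (hq1 : 1 < q) (g' : ℕ → L) (j : ℕ) :
    (annSeq q g' j).natDegree = q ^ j := by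
  induction j with
  | zero => simp [annSeq]
  | succ j ih =>
    have hpow : 0 < q ^ j := pow_pos (by omega) j
    have hdeg_pow : (annSeq q g' j ^ q).natDegree = q ^ (j + 1) := by
      rw [natDegree_pow, ih, pow_succ]; ring
    rw [annSeq, natDegree_sub_eq_left_of_natDegree_lt, hdeg_pow]
    rw [hdeg_pow]
    calc (C ((annSeq q g' j).eval (g' j) ^ (q - 1)) * annSeq q g' j).natDegree
        ≤ (annSeq q g' j).natDegree := natDegree_C_mul_le _ _
      _ = q ^ j := ih
      _ < q ^ (j + 1) := Nat.pow_lt_pow_right hq1 (Nat.lt_succ_self j)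

lemma annSeq_ne_zero {q : ℕ} (hq1 : 1 < q) (g' : ℕ → L) (j : ℕ) :
    annSeq q g' j ≠ 0 := by
  intro h
  have := annSeq_natDegree hq1 g' j
  rw [h, natDegree_zero] at this
  have : 0 < q ^ j := pow_pos (by omega) j
  omega

lemma isqLinearized_annSeq {p e q : ℕ} [CharP L p] (hp : p.Prime) (hq : q = p ^ e)
    (hq1 : 1 < q) (g' : ℕ → L) (j : ℕ) : IsqLinearized q (annSeq q g' j) := by
  haveI : Fact p.Prime := ⟨hp⟩
  induction j with
  | zero =>
    intro i hi
    rcases eq_or_ne i 1 with h | h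
    · exact ⟨0, by simp [h]⟩
    · rw [annSeq, coeff_X, if_neg (fun hh => h hh.symm)] at hi
      exact absurd rfl hi
  | succ j ih =>
    intro i hi
    rw [annSeq, coeff_sub, coeff_C_mul] at hi
    by_cases h1 : (annSeq q g' j ^ q).coeff i = 0
    · have h2 : (annSeq q g' j).coeff i ≠ 0 := by
        intro h; apply hi; rw [h1, h, mul_zero, sub_zero]
      exact ih i h2
    · have hpowq : annSeq q g' j ^ q =
          Polynomial.map (frobenius L p ^ e) (Polynomial.expand L (p ^ e) (annSeq q g' j)) := by
        rw [← iterateFrobenius_eq_pow, map_iterateFrobenius_expand, hq]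
      rw [hpowq, coeff_map] at h1
      have h3 : (Polynomial.expand L (p ^ e) (annSeq q g' j)).coeff i ≠ 0 := by
        intro h; apply h1; rw [h, map_zero]
      rw [← hq, Polynomial.coeff_expand (by omega : 0 < q)] at h3
      by_cases hdvd : q ∣ i
      · rw [if_pos hdvd] at h3
        obtain ⟨t, ht⟩ := ih _ h3
        exact ⟨t + 1, by rw [pow_succ, ← ht, Nat.div_mul_cancel hdvd]⟩
      · rw [if_neg hdvd] at h3
        exact absurd rfl h3

lemma annSeq_eval_zero {q : ℕ} (hq0 : 0 < q) (g' : ℕ → L) {j i : ℕ} (hij : i < j) :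
    (annSeq q g' j).eval (g' i) = 0 := by
  induction j with
  | zero => omega
  | succ j ih =>
    rw [annSeq]
    simp only [eval_sub, eval_pow, eval_mul, eval_C]
    rcases Nat.lt_or_ge i j with h | h
    · rw [ih h, zero_pow (by omega : q ≠ 0), mul_zero, sub_zero]
    · have hij' : i = j := by omega
      subst hij'
      rw [← pow_succ, Nat.sub_add_cancel hq0, sub_self]

end Helpers

lemma gabidulin_char {L : Type*} [Field L] [Fintype L] {q m : ℕ} (hq : IsPrimePow q)
    (hm : 0 < m) (hcardL : Fintype.card L = q ^ m) :
    ∃ p e : ℕ, p.Prime ∧ 0 < e ∧ q = p ^ e ∧ CharP L p := by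
  obtain ⟨p, e, hp, he, rfl⟩ := hq
  have hpnat : p.Prime := Nat.prime_iff.mpr hp
  haveI : CharP L (ringChar L) := ringChar.charP L
  have hr : (ringChar L).Prime := CharP.char_is_prime L (ringChar L)
  have hdvd : ringChar L ∣ Fintype.card L := by
    have h0 : ((Fintype.card L : ℕ) : L) = 0 := FiniteField.cast_card_eq_zero L
    exact (CharP.cast_eq_zero_iff L (ringChar L) _).mp h0
  rw [hcardL, ← pow_mul] at hdvd
  have hrp : ringChar L = p :=
    (Nat.prime_dvd_prime_iff_eq hr hpnat).mp (hr.dvd_of_dvd_pow hdvd)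
  exact ⟨p, e, hpnat, he, rfl, hrp ▸ ‹CharP L (ringChar L)›⟩

lemma gabidulin_core
    (q m : ℕ) (hq : IsPrimePow q) (hm : 0 < m)
    (F L : Type*) [Field F] [Field L] [Fintype F] [Fintype L] [Algebra F L]
    (hcardF : Fintype.card F = q) (hcardL : Fintype.card L = q ^ m)
    (n k : ℕ) (hk : 0 < k) (hkn : k ≤ n)
    (g : Fin n → L) (hg : LinearIndependent F g)
    (f : L[X]) (hf : IsqLinearized q f) (hf0 : f ≠ 0)
    (hfd : f.natDegree ≤ q ^ (k - 1)) :
    n - k + 1 ≤ Module.finrank F (Submodule.span F (Set.range fun i => f.eval (g i))) ∧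
      ((∀ i : Fin n, (i : ℕ) < k - 1 → f.eval (g i) = 0) →
        Module.finrank F (Submodule.span F (Set.range fun i => f.eval (g i))) = n - k + 1) := by
  classical
  obtain ⟨p, e, hp, he, hqpe, hchar⟩ := gabidulin_char hq hm hcardL
  haveI := hchar
  haveI : Fact p.Prime := ⟨hp⟩
  have hq1 : 1 < q := hq.one_lt
  have heval_add : ∀ x y : L, f.eval (x + y) = f.eval x + f.eval y := by
    intro x y
    rw [eval_eq_sum_range, eval_eq_sum_range, eval_eq_sum_range, ← Finset.sum_add_distrib]
    refine Finset.sum_congr rfl fun i _ => ?_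
    by_cases hc : f.coeff i = 0
    · simp [hc]
    · obtain ⟨j, rfl⟩ := hf i hc
      rw [hqpe, ← pow_mul, add_pow_char_pow, mul_add]
  have heval_smul : ∀ (c : F) (x : L), f.eval (c • x) = c • f.eval x := by
    intro c x
    rw [Algebra.smul_def, Algebra.smul_def, eval_eq_sum_range, eval_eq_sum_range, Finset.mul_sum]
    refine Finset.sum_congr rfl fun i _ => ?_
    by_cases hc : f.coeff i = 0
    · simp [hc]
    · obtain ⟨j, rfl⟩ := hf i hc
      have hfix : (algebraMap F L c) ^ q ^ j = algebraMap F L c := by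
        rw [← map_pow, ← hcardF, FiniteField.pow_card_pow]
      rw [mul_pow, hfix]
      ring
  let φ : L →ₗ[F] L :=
    { toFun := fun x => f.eval x
      map_add' := heval_add
      map_smul' := heval_smul }
  set V := Submodule.span F (Set.range g) with hV
  have hVrank : Module.finrank F V = n := by
    rw [finrank_span_eq_card hg, Fintype.card_fin]
  let ψ : V →ₗ[F] L := φ.comp V.subtype
  have hspan : Submodule.span F (Set.range fun i => f.eval (g i)) = LinearMap.range ψ := by
    rw [LinearMap.range_comp, Submodule.range_subtype, Submodule.map_span, ← Set.range_comp]
    rfl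
  have hrn : Module.finrank F (LinearMap.range ψ) + Module.finrank F (LinearMap.ker ψ) = n := by
    rw [LinearMap.finrank_range_add_finrank_ker ψ, hVrank]
  have hroots : ∀ x : L, f.eval x = 0 → x ∈ f.roots.toFinset := by
    intro x hx
    rw [Multiset.mem_toFinset, mem_roots hf0]
    exact hx
  -- kernel cardinality bound
  have hkercard : Nat.card (LinearMap.ker ψ) ≤ q ^ (k - 1) := by
    have hinj : Function.Injective
        (fun x : LinearMap.ker ψ => (⟨((x : V) : L), hroots _ x.2⟩ : {y // y ∈ f.roots.toFinset})) := by
      intro a b hab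
      have hval : ((a : V) : L) = ((b : V) : L) := by simpa using hab
      exact Subtype.ext (Subtype.ext hval)
    calc Nat.card (LinearMap.ker ψ) ≤ Nat.card {y // y ∈ f.roots.toFinset} :=
          Nat.card_le_card_of_injective _ hinj
      _ = f.roots.toFinset.card := Nat.card_eq_finsetCard _
      _ ≤ Multiset.card f.roots := f.roots.toFinset_card_le
      _ ≤ f.natDegree := f.card_roots'
      _ ≤ q ^ (k - 1) := hfd
  have hkerrank : Module.finrank F (LinearMap.ker ψ) ≤ k - 1 := by
    have hcardker : Nat.card (LinearMap.ker ψ) = q ^ Module.finrank F (LinearMap.ker ψ) := by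
      haveI : Fintype (LinearMap.ker ψ) := Fintype.ofFinite _
      rw [Nat.card_eq_fintype_card, Module.card_eq_pow_finrank (K := F), hcardF]
    rw [hcardker] at hkercard
    exact (Nat.pow_le_pow_iff_right hq1).mp hkercard
  constructor
  · rw [hspan]; omega
  · intro hker
    rw [hspan]
    -- lower bound on the kernel rank
    have hle : k - 1 ≤ n := by omega
    have hmem : ∀ i : Fin (k - 1), g (Fin.castLE hle i) ∈ V :=
      fun i => Submodule.subset_span ⟨_, rfl⟩
    have hker0 : ∀ i : Fin (k - 1),
        (⟨g (Fin.castLE hle i), hmem i⟩ : V) ∈ LinearMap.ker ψ := by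
      intro i
      rw [LinearMap.mem_ker]
      exact hker (Fin.castLE hle i) i.2
    let w : Fin (k - 1) → LinearMap.ker ψ := fun i => ⟨⟨g (Fin.castLE hle i), hmem i⟩, hker0 i⟩
    have hw : LinearIndependent F w := by
      apply LinearIndependent.of_comp (V.subtype.comp (LinearMap.ker ψ).subtype)
      have : (V.subtype.comp (LinearMap.ker ψ).subtype) ∘ w = g ∘ Fin.castLE hle := rfl
      rw [this]
      exact hg.comp _ (Fin.castLE_injective hle)
    have hge : k - 1 ≤ Module.finrank F (LinearMap.ker ψ) := by
      have := hw.fintype_card_le_finrank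
      simpa using this
    omega

/-- If `f` is a nonzero `q`-linearized polynomial of `q`-degree at most `k - 1` and
`g₁, …, gₙ` are linearly independent over `F_q`, then the span of `f(g₁), …, f(gₙ)`
has `F_q`-dimension at least `n - k + 1`.  Consequently the Gabidulin code of dimension
`k` with evaluation points `g₁, …, gₙ` has minimum rank distance `n - k + 1`. -/
theorem gabidulin_minimum_rank_distance
    (q m : ℕ) (hq : IsPrimePow q) (hm : 0 < m)
    (F L : Type*) [Field F] [Field L] [Fintype F] [Fintype L] [Algebra F L]
    (hcardF : Fintype.card F = q) (hcardL : Fintype.card L = q ^ m)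
    (n k : ℕ) (hk : 0 < k) (hkn : k ≤ n)
    (g : Fin n → L) (hg : LinearIndependent F g)
    (f : L[X]) (hf : IsqLinearized q f) (hf0 : f ≠ 0)
    (hfd : f.natDegree ≤ q ^ (k - 1)) :
    n - k + 1 ≤
      Module.finrank F (Submodule.span F (Set.range fun i => f.eval (g i))) ∧
    ((∀ f₁ f₂ : L[X], IsqLinearized q f₁ → IsqLinearized q f₂ →
        f₁.natDegree < q ^ k → f₂.natDegree < q ^ k →
        (∃ i, f₁.eval (g i) ≠ f₂.eval (g i)) →
        n - k + 1 ≤ Module.finrank F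
          (Submodule.span F (Set.range fun i => f₁.eval (g i) - f₂.eval (g i)))) ∧
      ∃ f₁ f₂ : L[X], IsqLinearized q f₁ ∧ IsqLinearized q f₂ ∧
        f₁.natDegree < q ^ k ∧ f₂.natDegree < q ^ k ∧
        (∃ i, f₁.eval (g i) ≠ f₂.eval (g i)) ∧
        Module.finrank F
          (Submodule.span F (Set.range fun i => f₁.eval (g i) - f₂.eval (g i)))
          = n - k + 1) := by
  have hq1 : 1 < q := hq.one_lt
  obtain ⟨p, e, hp, he, hqpe, hchar⟩ := gabidulin_char hq hm hcardL
  haveI := hchar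
  refine ⟨(gabidulin_core q m hq hm F L hcardF hcardL n k hk hkn g hg f hf hf0 hfd).1, ?_, ?_⟩
  · -- any two distinct codewords differ in rank at least n - k + 1
    intro f₁ f₂ h1 h2 hd1 hd2 hne
    have hsubne : f₁ - f₂ ≠ 0 := by
      obtain ⟨i, hi⟩ := hne
      intro h
      exact hi (by rw [sub_eq_zero.mp h])
    have hlin : IsqLinearized q (f₁ - f₂) := by
      intro i hi
      rw [coeff_sub] at hi
      by_cases h : f₁.coeff i = 0
      · exact h2 i (fun h' => hi (by rw [h, h', sub_self]))
      · exact h1 i h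
    have hdeg : (f₁ - f₂).natDegree ≤ q ^ (k - 1) := by
      obtain ⟨j, hj⟩ := hlin _ (by
        rw [← leadingCoeff]
        exact leadingCoeff_ne_zero.mpr hsubne)
      have hlt : (f₁ - f₂).natDegree < q ^ k :=
        lt_of_le_of_lt (natDegree_sub_le _ _) (max_lt hd1 hd2)
      rw [hj] at hlt ⊢
      have hjk : j < k := (Nat.pow_lt_pow_iff_right hq1).mp hlt
      exact Nat.pow_le_pow_right (by omega) (by omega)
    have hcore := (gabidulin_core q m hq hm F L hcardF hcardL n k hk hkn g hg
        (f₁ - f₂) hlin hsubne hdeg).1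
    have hfun : (fun i : Fin n => f₁.eval (g i) - f₂.eval (g i))
        = fun i : Fin n => (f₁ - f₂).eval (g i) := by
      funext i; rw [eval_sub]
    rw [hfun]
    exact hcore
  · -- a codeword achieving rank exactly n - k + 1
    set g' : ℕ → L := fun i => if h : i < n then g ⟨i, h⟩ else 0 with hg'
    set f₁ := annSeq q g' (k - 1) with hf₁
    have hd : f₁.natDegree = q ^ (k - 1) := annSeq_natDegree hq1 g' (k - 1)
    have hlin : IsqLinearized q f₁ := isqLinearized_annSeq hp hqpe hq1 g' (k - 1)
    have hne0 : f₁ ≠ 0 := annSeq_ne_zero hq1 g' (k - 1)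
    have hker : ∀ i : Fin n, (i : ℕ) < k - 1 → f₁.eval (g i) = 0 := by
      intro i hi
      have : g i = g' (i : ℕ) := by
        rw [hg']
        simp [i.2]
      rw [this]
      exact annSeq_eval_zero (by omega) g' hi
    have heq := (gabidulin_core q m hq hm F L hcardF hcardL n k hk hkn g hg
        f₁ hlin hne0 (le_of_eq hd)).2 hker
    have hlin0 : IsqLinearized q (0 : L[X]) := by
      intro i hi
      simp at hi
    have hd1 : f₁.natDegree < q ^ k := by
      rw [hd]
      exact Nat.pow_lt_pow_right hq1 (by omega)
    have hd2 : (0 : L[X]).natDegree < q ^ k := by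
      rw [natDegree_zero]
      exact pow_pos (by omega) k
    have hex : ∃ i, f₁.eval (g i) ≠ (0 : L[X]).eval (g i) := by
      by_contra hcon
      push_neg at hcon
      simp only [eval_zero] at hcon
      have hfun : (fun i : Fin n => f₁.eval (g i)) = fun _ => (0 : L) := funext hcon
      rw [hfun] at heq
      haveI : Nonempty (Fin n) := ⟨⟨0, by omega⟩⟩
      rw [Set.range_const] at heq
      rw [Submodule.span_zero_singleton, finrank_bot] at heq
      omega
    refine ⟨f₁, 0, hlin, hlin0, hd1, hd2, hex, ?_⟩
    have hfun : (fun i : Fin n => f₁.eval (g i) - (0 : L[X]).eval (g i))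
        = fun i : Fin n => f₁.eval (g i) := by
      funext i; rw [eval_zero, sub_zero]
    rw [hfun]
    exact heq
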